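/- For every hypothesis class H with 1 < w(H) < ∞, every time horizon T ≥ 2 and realizability parameter k, the deterministic apple tasting mistake bound satisfies M*(H, T, k) = O(√(T·(k + L(H)·log T))). -/

import Mathlib

/-- Littlestone shattering of a perfect binary mistake tree of depth `d`. -/
inductive Shatters {X : Type*} : Set (X → Bool) → ℕ → Prop
  | zero (H : Set (X → Bool)) (hne : H.Nonempty) : Shatters H 0
  | succ (H : Set (X → Bool)) (d : ℕ) (x : X)
      (h0 : Shatters {h ∈ H | h x = false} d)
      (h1 : Shatters {h ∈ H | h x = true} d) : Shatters H (d + 1)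

/-- `W1Shatters H d` : `H` shatters a width-1 tree of depth `d` (a perfect binary tree
truncated below the first right edge of each branch): at each node some `h ∈ H` realizes
the branch ending with the right edge, and the `x → 0` restriction shatters the left
subtree. -/
inductive W1Shatters {X : Type*} : Set (X → Bool) → ℕ → Prop
  | zero (H : Set (X → Bool)) (hne : H.Nonempty) : W1Shatters H 0
  | succ (H : Set (X → Bool)) (d : ℕ) (x : X)
      (hr : ∃ h ∈ H, h x = true)
      (hl : W1Shatters {h ∈ H | h x = false} d) : W1Shatters H (d + 1)

/-- A deterministic apple tasting learner for a hypothesis class: it maps the feedback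
history (instances together with the revealed label when the learner predicted `1`)
and the current instance to a prediction. -/
def ConceptLearner (X : Type) : Type := List (X × Option Bool) → X → Bool

/-- The feedback history produced by running learner `Lrn` on instances `x` and true
labels `y` under apple tasting feedback. -/
def histC (X : Type) (Lrn : ConceptLearner X) (x : ℕ → X) (y : ℕ → Bool) :
    ℕ → List (X × Option Bool)
  | 0 => []
  | t + 1 =>
      histC X Lrn x y t ++
        [(x t, if Lrn (histC X Lrn x y t) (x t) = true then some (y t) else none)]

/-- The learner's prediction in round `t`. -/
def predC (X : Type) (Lrn : ConceptLearner X) (x : ℕ → X) (y : ℕ → Bool) (t : ℕ) : Bool :=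
  Lrn (histC X Lrn x y t) (x t)

/-- The number of mistakes made by the learner during the first `T` rounds. -/
def mistakesC (X : Type) (Lrn : ConceptLearner X) (x : ℕ → X) (y : ℕ → Bool) (T : ℕ) : ℕ :=
  ((Finset.range T).filter (fun t => predC X Lrn x y t ≠ y t)).card


namespace Shatters

variable {X : Type*}

protected theorem nonempty {H : Set (X → Bool)} {d : ℕ} (h : Shatters H d) : H.Nonempty := by
  induction h with
  | zero H hne => exact hne
  | succ H d x h0 h1 ih0 ih1 => exact ih0.imp fun g hg => hg.1

protected theorem mono {H1 H2 : Set (X → Bool)} {d : ℕ} (hsub : H1 ⊆ H2)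
    (h : Shatters H1 d) : Shatters H2 d := by
  induction h generalizing H2 with
  | zero H hne => exact .zero _ (Set.Nonempty.mono hsub hne)
  | succ H d x h0 h1 ih0 ih1 =>
      exact .succ _ d x (ih0 (fun g hg => ⟨hsub hg.1, hg.2⟩)) (ih1 (fun g hg => ⟨hsub hg.1, hg.2⟩))

protected theorem pred {d : ℕ} : ∀ {H : Set (X → Bool)}, Shatters H (d + 1) → Shatters H d := by
  induction d with
  | zero =>
    intro H h
    cases h with
    | succ H d x h0 h1 => exact .zero _ (Set.Nonempty.mono (fun g hg => hg.1) h0.nonempty)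
  | succ d ih =>
    intro H h
    cases h with
    | succ H _ x h0 h1 => exact .succ _ _ x (ih h0) (ih h1)

protected theorem of_le {H : Set (X → Bool)} {d e : ℕ} (h : Shatters H d) (he : e ≤ d) :
    Shatters H e := by
  obtain ⟨j, rfl⟩ := Nat.exists_eq_add_of_le he
  clear he
  induction j with
  | zero => exact h
  | succ j ih => exact ih ((Nat.add_succ e j ▸ h).pred)

end Shatters

namespace AT
open Finset
open scoped Classical

variable {X : Type*}

/-- Littlestone dimension as a natural number (`0` for empty classes). -/
noncomputable def ld (V : Set (X → Bool)) : ℕ := sSup {m | Shatters V m}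

variable {H : Set (X → Bool)} {ℓ : ℕ}

theorem bddAbove_shatters (hG : IsGreatest {m : ℕ | Shatters H m} ℓ) {V : Set (X → Bool)}
    (hVH : V ⊆ H) : BddAbove {m | Shatters V m} :=
  ⟨ℓ, fun _ hm => hG.2 (hm.mono hVH)⟩

theorem le_ld (hG : IsGreatest {m : ℕ | Shatters H m} ℓ) {V : Set (X → Bool)} (hVH : V ⊆ H)
    {m : ℕ} (hm : Shatters V m) : m ≤ ld V :=
  le_csSup (bddAbove_shatters hG hVH) hm

theorem shatters_ld (hG : IsGreatest {m : ℕ | Shatters H m} ℓ) {V : Set (X → Bool)} (hVH : V ⊆ H)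
    (hne : V.Nonempty) : Shatters V (ld V) :=
  Nat.sSup_mem ⟨0, Shatters.zero _ hne⟩ (bddAbove_shatters hG hVH)

theorem ld_le_of_subset (hG : IsGreatest {m : ℕ | Shatters H m} ℓ) {V W : Set (X → Bool)}
    (hVW : V ⊆ W) (hWH : W ⊆ H) : ld V ≤ ld W := by
  by_cases hne : V.Nonempty
  · exact csSup_le_csSup (bddAbove_shatters hG hWH) ⟨0, Shatters.zero _ hne⟩
      (fun m hm => hm.mono hVW)
  · have he : {m | Shatters V m} = ∅ := by
      ext m; simp only [Set.mem_setOf_eq, Set.mem_empty_iff_false, iff_false]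
      exact fun hm => hne hm.nonempty
    simp [ld, he]

theorem ld_le (hG : IsGreatest {m : ℕ | Shatters H m} ℓ) {V : Set (X → Bool)} (hVH : V ⊆ H) :
    ld V ≤ ℓ := by
  by_cases hne : V.Nonempty
  · exact hG.2 ((shatters_ld hG hVH hne).mono hVH)
  · have he : {m | Shatters V m} = ∅ := by
      ext m; simp only [Set.mem_setOf_eq, Set.mem_empty_iff_false, iff_false]
      exact fun hm => hne hm.nonempty
    simp [ld, he]

/-- The standard-optimal-algorithm prediction on version space `V` at point `x`. -/
noncomputable def soaPred (V : Set (X → Bool)) (x : X) : Bool :=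
  if ({h ∈ V | h x = true}).Nonempty then
    (if ({h ∈ V | h x = false}).Nonempty then
      decide (ld {h ∈ V | h x = false} ≤ ld {h ∈ V | h x = true}) else true)
  else false

theorem ld_lt_of_mistake (hG : IsGreatest {m : ℕ | Shatters H m} ℓ) {V : Set (X → Bool)}
    (hVH : V ⊆ H) {h : X → Bool} (hhV : h ∈ V) {x : X} (hne : soaPred V x ≠ h x) :
    ld {g ∈ V | g x = h x} < ld V := by
  have hbH : {g ∈ V | g x = true} ⊆ H := fun g hg => hVH hg.1
  have hfH : {g ∈ V | g x = false} ⊆ H := fun g hg => hVH hg.1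
  cases hb : h x with
  | true =>
    have hVb : ({g ∈ V | g x = true}).Nonempty := ⟨h, hhV, hb⟩
    rw [hb] at hne
    unfold soaPred at hne
    rw [if_pos hVb] at hne
    have h0 : ({g ∈ V | g x = false}).Nonempty := by
      by_contra h0
      rw [if_neg h0] at hne; exact hne rfl
    rw [if_pos h0] at hne
    have hlt : ld {g ∈ V | g x = true} < ld {g ∈ V | g x = false} := by
      by_contra hc
      push_neg at hc
      simp [hc] at hne
    have s1 : Shatters {g ∈ V | g x = true} (ld {g ∈ V | g x = true}) :=
      shatters_ld hG hbH hVb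
    have s2 : Shatters {g ∈ V | g x = false} (ld {g ∈ V | g x = true}) :=
      (shatters_ld hG hfH h0).of_le (le_of_lt hlt)
    have sV : Shatters V (ld {g ∈ V | g x = true} + 1) := Shatters.succ V (ld {g ∈ V | g x = true}) x s2 s1
    exact Nat.lt_of_lt_of_le (Nat.lt_succ_self _) (le_ld hG hVH sV)
  | false =>
    have hVb : ({g ∈ V | g x = false}).Nonempty := ⟨h, hhV, hb⟩
    rw [hb] at hne
    unfold soaPred at hne
    have h1 : ({g ∈ V | g x = true}).Nonempty := by
      by_contra h1
      rw [if_neg h1] at hne; exact hne rfl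
    rw [if_pos h1, if_pos hVb] at hne
    have hle : ld {g ∈ V | g x = false} ≤ ld {g ∈ V | g x = true} := by
      by_contra hc
      simp [hc] at hne
    have s1 : Shatters {g ∈ V | g x = false} (ld {g ∈ V | g x = false}) :=
      shatters_ld hG hfH hVb
    have s2 : Shatters {g ∈ V | g x = true} (ld {g ∈ V | g x = false}) :=
      (shatters_ld hG hbH h1).of_le hle
    have sV : Shatters V (ld {g ∈ V | g x = false} + 1) := Shatters.succ V (ld {g ∈ V | g x = false}) x s1 s2
    exact Nat.lt_of_lt_of_le (Nat.lt_succ_self _) (le_ld hG hVH sV)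

/-- Version space along a sequence of points and labels. -/
def vsp (H : Set (X → Bool)) (x : ℕ → X) (lab : ℕ → Bool) : ℕ → Set (X → Bool)
  | 0 => H
  | t+1 => {h ∈ vsp H x lab t | h (x t) = lab t}

theorem vsp_subset (H : Set (X → Bool)) (x : ℕ → X) (lab : ℕ → Bool) :
    ∀ t, vsp H x lab t ⊆ H
  | 0 => le_refl H
  | t+1 => fun g hg => vsp_subset H x lab t hg.1

theorem mem_vsp {h : X → Bool} (hh : h ∈ H) (x : ℕ → X) :
    ∀ t, h ∈ vsp H x (fun s => h (x s)) t
  | 0 => hh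
  | t+1 => ⟨mem_vsp hh x t, rfl⟩

theorem card_filter_succ (p : ℕ → Prop) [DecidablePred p] (t : ℕ) :
    ((range (t+1)).filter p).card
      = ((range t).filter p).card + (if p t then 1 else 0) := by
  rw [Finset.card_filter, Finset.card_filter, Finset.sum_range_succ]

theorem soa_mistake_bound (hG : IsGreatest {m : ℕ | Shatters H m} ℓ) (x : ℕ → X)
    {h : X → Bool} (hh : h ∈ H) (T : ℕ) :
    ((range T).filter
        (fun t => soaPred (vsp H x (fun s => h (x s)) t) (x t) ≠ h (x t))).card ≤ ℓ := by
  set lab : ℕ → Bool := fun s => h (x s) with hlab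
  have key : ∀ t, ((range t).filter
      (fun t => soaPred (vsp H x lab t) (x t) ≠ h (x t))).card + ld (vsp H x lab t) ≤ ℓ := by
    intro t
    induction t with
    | zero => simpa using (ld_le hG (le_refl H) : ld (vsp H x lab 0) ≤ ℓ)
    | succ t ih =>
      rw [card_filter_succ]
      by_cases hm : soaPred (vsp H x lab t) (x t) ≠ h (x t)
      · rw [if_pos hm]
        have hlt : ld (vsp H x lab (t+1)) < ld (vsp H x lab t) := by
          have : vsp H x lab (t+1) = {g ∈ vsp H x lab t | g (x t) = h (x t)} := rfl
          rw [this]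
          exact ld_lt_of_mistake hG (vsp_subset H x lab t) (mem_vsp hh x t) hm
        omega
      · rw [if_neg hm]
        have hle : ld (vsp H x lab (t+1)) ≤ ld (vsp H x lab t) :=
          ld_le_of_subset hG (fun g hg => hg.1) (vsp_subset H x lab t)
        omega
  have := key T
  omega

/-- The version space simulated by the expert indexed by the mistake set `B`. -/
noncomputable def simVS (H : Set (X → Bool)) (B : Finset ℕ) (x : ℕ → X) : ℕ → Set (X → Bool)
  | 0 => H
  | t+1 => {h ∈ simVS H B x t | h (x t) =
      (if t ∈ B then !(soaPred (simVS H B x t) (x t)) else soaPred (simVS H B x t) (x t))}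

/-- The advice of the expert indexed by `B` at time `t`. -/
noncomputable def eAdv (H : Set (X → Bool)) (B : Finset ℕ) (x : ℕ → X) (t : ℕ) : Bool :=
  if t ∈ B then !(soaPred (simVS H B x t) (x t)) else soaPred (simVS H B x t) (x t)

theorem simVS_congr (B : Finset ℕ) {x x' : ℕ → X} :
    ∀ t, (∀ s, s < t → x s = x' s) → simVS H B x t = simVS H B x' t
  | 0 => fun _ => rfl
  | t+1 => fun hagree => by
      have ih := simVS_congr B t (fun s hs => hagree s (Nat.lt_succ_of_lt hs))
      show {h ∈ simVS H B x t | _} = {h ∈ simVS H B x' t | _}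
      rw [← ih, ← hagree t (Nat.lt_succ_self t)]

theorem eAdv_congr (B : Finset ℕ) {x x' : ℕ → X} (t : ℕ) (hagree : ∀ s, s ≤ t → x s = x' s) :
    eAdv H B x t = eAdv H B x' t := by
  unfold eAdv
  rw [← simVS_congr B t (fun s hs => hagree s (le_of_lt hs)), ← hagree t (le_refl t)]

theorem cover (hG : IsGreatest {m : ℕ | Shatters H m} ℓ) (x : ℕ → X)
    {h : X → Bool} (hh : h ∈ H) (T : ℕ) :
    ∃ B : Finset ℕ, B ⊆ range T ∧ B.card ≤ ℓ ∧ ∀ t, t < T → eAdv H B x t = h (x t) := by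
  set lab : ℕ → Bool := fun s => h (x s) with hlab
  set B : Finset ℕ :=
    (range T).filter (fun t => soaPred (vsp H x lab t) (x t) ≠ h (x t)) with hB
  have hmemB : ∀ t, t < T → (t ∈ B ↔ soaPred (vsp H x lab t) (x t) ≠ h (x t)) := by
    intro t ht
    simp [hB, Finset.mem_filter, Finset.mem_range, ht]
  have hsim : ∀ t, t ≤ T → simVS H B x t = vsp H x lab t := by
    intro t
    induction t with
    | zero => intro _; rfl
    | succ t ih =>
      intro hT
      have ht : t < T := hT
      have iht := ih (le_of_lt ht)
      show {g ∈ simVS H B x t | g (x t) =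
        (if t ∈ B then !(soaPred (simVS H B x t) (x t)) else soaPred (simVS H B x t) (x t))}
        = vsp H x lab (t+1)
      rw [iht]
      have hlabel : (if t ∈ B then !(soaPred (vsp H x lab t) (x t))
          else soaPred (vsp H x lab t) (x t)) = h (x t) := by
        by_cases hm : soaPred (vsp H x lab t) (x t) = h (x t)
        · rw [if_neg]
          · exact hm
          · rw [hmemB t ht]; simp [hm]
        · rw [if_pos ((hmemB t ht).2 hm)]
          cases hp : soaPred (vsp H x lab t) (x t) <;>
            cases hx : h (x t) <;> simp_all [hlab]
      rw [hlabel]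
      rfl
  refine ⟨B, Finset.filter_subset _ _, ?_, ?_⟩
  · exact soa_mistake_bound hG x hh T
  · intro t ht
    unfold eAdv
    rw [hsim t (le_of_lt ht)]
    by_cases hm : soaPred (vsp H x lab t) (x t) = h (x t)
    · rw [if_neg]
      · exact hm
      · rw [hmemB t ht]; simp [hm]
    · rw [if_pos ((hmemB t ht).2 hm)]
      cases hp : soaPred (vsp H x lab t) (x t) <;> cases hx : h (x t) <;> simp_all [hlab]

section ExpAT

variable {ι : Type*} (J : Finset ι) (A : ι → ℕ → Bool) (y : ℕ → Bool) (θ : ℝ)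

/-- Multiplicative weights with imputed label `1` on rounds where the algorithm predicts `0`. -/
noncomputable def wfun : ℕ → ι → ℝ
  | 0 => fun _ => 1
  | t+1 => fun B =>
      wfun t B *
        (if θ * (∑ C ∈ J, wfun t C) ≤ ∑ C ∈ J.filter (fun C => A C t = true), wfun t C
         then (if A B t ≠ y t then Real.exp (-1) else 1)
         else (if A B t = false then Real.exp (-θ) else 1))

/-- The prediction of deterministic `ExpAT` at round `t`. -/
noncomputable def Pfun (t : ℕ) : Bool :=
  decide (θ * (∑ C ∈ J, wfun J A y θ t C)
    ≤ ∑ C ∈ J.filter (fun C => A C t = true), wfun J A y θ t C)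

theorem wfun_succ (t : ℕ) (B : ι) :
    wfun J A y θ (t+1) B =
      wfun J A y θ t B *
        (if θ * (∑ C ∈ J, wfun J A y θ t C)
            ≤ ∑ C ∈ J.filter (fun C => A C t = true), wfun J A y θ t C
         then (if A B t ≠ y t then Real.exp (-1) else 1)
         else (if A B t = false then Real.exp (-θ) else 1)) := rfl

theorem wfun_pos (t : ℕ) (B : ι) : 0 < wfun J A y θ t B := by
  induction t with
  | zero => norm_num [wfun]
  | succ t ih =>
    rw [wfun_succ]
    apply mul_pos ih
    split_ifs <;> positivity

theorem wfun_factor_le_one (hθ0 : 0 ≤ θ) (t : ℕ) (B : ι) :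
    wfun J A y θ (t+1) B ≤ wfun J A y θ t B := by
  rw [wfun_succ]
  have h1 : Real.exp (-1) ≤ 1 := Real.exp_le_one_iff.mpr (by norm_num)
  have h2 : Real.exp (-θ) ≤ 1 := Real.exp_le_one_iff.mpr (by linarith)
  nth_rewrite 2 [← mul_one (wfun J A y θ t B)]
  apply mul_le_mul_of_nonneg_left _ (le_of_lt (wfun_pos J A y θ t B))
  split_ifs <;> first | exact le_refl _ | assumption

/-- Potential function: log of total weight over comparator's weight. -/
noncomputable def Phi (b : ι) (t : ℕ) : ℝ :=
  Real.log (∑ C ∈ J, wfun J A y θ t C) - Real.log (wfun J A y θ t b)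

theorem sum_mul_ite_fac (w : ι → ℝ) (p : ι → Prop) [DecidablePred p] (a : ℝ) :
    ∑ C ∈ J, w C * (if p C then a else 1)
      = (∑ C ∈ J, w C) - (1 - a) * (∑ C ∈ J.filter p, w C) := by
  rw [← Finset.sum_filter_add_sum_filter_not J p w,
      ← Finset.sum_filter_add_sum_filter_not J p (fun C => w C * (if p C then a else 1))]
  have h1 : ∑ C ∈ J.filter p, w C * (if p C then a else 1)
      = (∑ C ∈ J.filter p, w C) * a := by
    rw [Finset.sum_mul]; apply Finset.sum_congr rfl; intro C hC
    rw [if_pos (Finset.mem_filter.mp hC).2]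
  have h2 : ∑ C ∈ J.filter (fun C => ¬ p C), w C * (if p C then a else 1)
      = ∑ C ∈ J.filter (fun C => ¬ p C), w C := by
    apply Finset.sum_congr rfl; intro C hC
    rw [if_neg (Finset.mem_filter.mp hC).2, mul_one]
  rw [h1, h2]; ring

theorem Wsucc_posTrue (t : ℕ)
    (hc : θ * (∑ C ∈ J, wfun J A y θ t C)
      ≤ ∑ C ∈ J.filter (fun C => A C t = true), wfun J A y θ t C)
    (hy : y t = true) :
    ∑ C ∈ J, wfun J A y θ (t+1) C
      = (∑ C ∈ J, wfun J A y θ t C) - (1 - Real.exp (-1)) *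
          ((∑ C ∈ J, wfun J A y θ t C)
            - ∑ C ∈ J.filter (fun C => A C t = true), wfun J A y θ t C) := by
  have e1 : ∀ C ∈ J, wfun J A y θ (t+1) C
      = wfun J A y θ t C * (if A C t ≠ y t then Real.exp (-1) else 1) := by
    intro C _; rw [wfun_succ, if_pos hc]
  rw [Finset.sum_congr rfl e1, sum_mul_ite_fac]
  have hfilter : J.filter (fun C => A C t ≠ y t) = J.filter (fun C => ¬ A C t = true) := by
    apply Finset.filter_congr; intro C _; rw [hy]
  have hsplit := Finset.sum_filter_add_sum_filter_not J (fun C => A C t = true)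
    (fun C => wfun J A y θ t C)
  rw [hfilter]
  have h3 : (∑ x ∈ J.filter (fun x => ¬ A x t = true), wfun J A y θ t x)
      = (∑ C ∈ J, wfun J A y θ t C)
        - ∑ C ∈ J.filter (fun C => A C t = true), wfun J A y θ t C := by
    linarith [hsplit]
  rw [h3]

theorem Wsucc_posFalse (t : ℕ)
    (hc : θ * (∑ C ∈ J, wfun J A y θ t C)
      ≤ ∑ C ∈ J.filter (fun C => A C t = true), wfun J A y θ t C)
    (hy : y t = false) :
    ∑ C ∈ J, wfun J A y θ (t+1) C
      = (∑ C ∈ J, wfun J A y θ t C) - (1 - Real.exp (-1)) *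
          (∑ C ∈ J.filter (fun C => A C t = true), wfun J A y θ t C) := by
  have e1 : ∀ C ∈ J, wfun J A y θ (t+1) C
      = wfun J A y θ t C * (if A C t ≠ y t then Real.exp (-1) else 1) := by
    intro C _; rw [wfun_succ, if_pos hc]
  rw [Finset.sum_congr rfl e1, sum_mul_ite_fac]
  have hfilter : J.filter (fun C => A C t ≠ y t) = J.filter (fun C => A C t = true) := by
    apply Finset.filter_congr; intro C _; rw [hy]
    constructor
    · intro h; cases hC : A C t
      · exact absurd hC h
      · rfl
    · intro h; rw [h]; simp
  rw [hfilter]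

theorem Wsucc_neg (t : ℕ)
    (hc : ¬ (θ * (∑ C ∈ J, wfun J A y θ t C)
      ≤ ∑ C ∈ J.filter (fun C => A C t = true), wfun J A y θ t C)) :
    ∑ C ∈ J, wfun J A y θ (t+1) C
      = (∑ C ∈ J, wfun J A y θ t C) - (1 - Real.exp (-θ)) *
          ((∑ C ∈ J, wfun J A y θ t C)
            - ∑ C ∈ J.filter (fun C => A C t = true), wfun J A y θ t C) := by
  have e1 : ∀ C ∈ J, wfun J A y θ (t+1) C
      = wfun J A y θ t C * (if A C t = false then Real.exp (-θ) else 1) := by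
    intro C _; rw [wfun_succ, if_neg hc]
  rw [Finset.sum_congr rfl e1, sum_mul_ite_fac]
  have hfilter : J.filter (fun C => A C t = false) = J.filter (fun C => ¬ A C t = true) := by
    apply Finset.filter_congr; intro C _; simp
  have hsplit := Finset.sum_filter_add_sum_filter_not J (fun C => A C t = true)
    (fun C => wfun J A y θ t C)
  rw [hfilter]
  have h3 : (∑ x ∈ J.filter (fun x => ¬ A x t = true), wfun J A y θ t x)
      = (∑ C ∈ J, wfun J A y θ t C)
        - ∑ C ∈ J.filter (fun C => A C t = true), wfun J A y θ t C := by
    linarith [hsplit]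
  rw [h3]

theorem phi_step_le {b : ι} (hb : b ∈ J) (t : ℕ) {c f : ℝ}
    (hW' : ∑ C ∈ J, wfun J A y θ (t+1) C = (∑ C ∈ J, wfun J A y θ t C) - c)
    (hfac : wfun J A y θ (t+1) b = wfun J A y θ t b * f) (hf : 0 < f) :
    Phi J A y θ b (t+1) ≤ Phi J A y θ b t
      + (- (c / (∑ C ∈ J, wfun J A y θ t C)) - Real.log f) := by
  have hWpos : 0 < ∑ C ∈ J, wfun J A y θ t C :=
    Finset.sum_pos (fun C _ => wfun_pos J A y θ t C) ⟨b, hb⟩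
  have hW'pos : 0 < ∑ C ∈ J, wfun J A y θ (t+1) C :=
    Finset.sum_pos (fun C _ => wfun_pos J A y θ (t+1) C) ⟨b, hb⟩
  have hwb : 0 < wfun J A y θ t b := wfun_pos J A y θ t b
  have hlogW : Real.log (∑ C ∈ J, wfun J A y θ (t+1) C)
      ≤ Real.log (∑ C ∈ J, wfun J A y θ t C)
        - c / (∑ C ∈ J, wfun J A y θ t C) := by
    have hdiv : 0 < (∑ C ∈ J, wfun J A y θ (t+1) C) / (∑ C ∈ J, wfun J A y θ t C) :=
      div_pos hW'pos hWpos
    have h1 := Real.log_le_sub_one_of_pos hdiv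
    rw [Real.log_div (ne_of_gt hW'pos) (ne_of_gt hWpos)] at h1
    have h2 : (∑ C ∈ J, wfun J A y θ (t+1) C) / (∑ C ∈ J, wfun J A y θ t C) - 1
        = - (c / (∑ C ∈ J, wfun J A y θ t C)) := by
      rw [hW']
      field_simp
      ring
    rw [h2] at h1
    linarith
  have hlogb : Real.log (wfun J A y θ (t+1) b)
      = Real.log (wfun J A y θ t b) + Real.log f := by
    rw [hfac, Real.log_mul (ne_of_gt hwb) (ne_of_gt hf)]
  unfold Phi
  rw [hlogb]
  linarith

theorem phi_step_le' {b : ι} (hb : b ∈ J) (hθ0 : 0 ≤ θ) (t : ℕ) {f : ℝ}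
    (hfac : wfun J A y θ (t+1) b = wfun J A y θ t b * f) (hf : 0 < f) :
    Phi J A y θ b (t+1) ≤ Phi J A y θ b t - Real.log f := by
  have hWpos : 0 < ∑ C ∈ J, wfun J A y θ t C :=
    Finset.sum_pos (fun C _ => wfun_pos J A y θ t C) ⟨b, hb⟩
  have hW'pos : 0 < ∑ C ∈ J, wfun J A y θ (t+1) C :=
    Finset.sum_pos (fun C _ => wfun_pos J A y θ (t+1) C) ⟨b, hb⟩
  have hle : ∑ C ∈ J, wfun J A y θ (t+1) C ≤ ∑ C ∈ J, wfun J A y θ t C :=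
    Finset.sum_le_sum (fun C _ => wfun_factor_le_one J A y θ hθ0 t C)
  have hlogW := Real.log_le_log hW'pos hle
  have hwb : 0 < wfun J A y θ t b := wfun_pos J A y θ t b
  have hlogb : Real.log (wfun J A y θ (t+1) b)
      = Real.log (wfun J A y θ t b) + Real.log f := by
    rw [hfac, Real.log_mul (ne_of_gt hwb) (ne_of_gt hf)]
  unfold Phi
  rw [hlogb]
  linarith

theorem exp_neg_one_le_half : Real.exp (-1 : ℝ) ≤ 1/2 := by
  rw [Real.exp_neg]
  have h2 : (2:ℝ) ≤ Real.exp 1 := by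
    have := Real.exp_one_gt_d9
    linarith
  rw [inv_le_comm₀ ( by positivity) (by norm_num)]
  linarith

theorem exp_neg_le_inv (hθ0 : 0 ≤ θ) : Real.exp (-θ) ≤ 1/(1+θ) := by
  have h1 : (0:ℝ) < 1 + θ := by linarith
  have h2 : 1 + θ ≤ Real.exp θ := by have := Real.add_one_le_exp θ; linarith
  rw [Real.exp_neg, one_div]
  exact inv_anti₀ h1 h2

theorem Phi_succ_le {b : ι} (hb : b ∈ J) (hθ0 : 0 < θ) (hθ : θ ≤ 1/2) (t : ℕ) :
    Phi J A y θ b (t+1) ≤ Phi J A y θ b t +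
      (if A b t ≠ y t then 1
       else if Pfun J A y θ t ≠ y t then -(θ/3) else 2*θ^2) := by
  have hWpos : 0 < ∑ C ∈ J, wfun J A y θ t C :=
    Finset.sum_pos (fun C _ => wfun_pos J A y θ t C) ⟨b, hb⟩
  have hW1nonneg : 0 ≤ ∑ C ∈ J.filter (fun C => A C t = true), wfun J A y θ t C :=
    Finset.sum_nonneg (fun C _ => (wfun_pos J A y θ t C).le)
  have hW1le : (∑ C ∈ J.filter (fun C => A C t = true), wfun J A y θ t C)
      ≤ ∑ C ∈ J, wfun J A y θ t C :=
    Finset.sum_le_sum_of_subset_of_nonneg (Finset.filter_subset _ _)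
      (fun C hC _ => (wfun_pos J A y θ t C).le)
  have hE1 : Real.exp (-1 : ℝ) ≤ 1/2 := exp_neg_one_le_half
  have hEθ : Real.exp (-θ) ≤ 1/(1+θ) := exp_neg_le_inv θ hθ0.le
  have h1θ : (0:ℝ) < 1 + θ := by linarith
  by_cases hcond : θ * (∑ C ∈ J, wfun J A y θ t C)
      ≤ ∑ C ∈ J.filter (fun C => A C t = true), wfun J A y θ t C
  · -- algorithm predicts 1
    have hP : Pfun J A y θ t = true := by simp [Pfun, hcond]
    by_cases habm : A b t = y t
    · rw [if_neg (not_not_intro habm)]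
      have hfac : wfun J A y θ (t+1) b = wfun J A y θ t b * 1 := by
        rw [wfun_succ, if_pos hcond, if_neg (not_not_intro habm)]
      cases hy : y t with
      | true =>
        -- true positive: no mistake
        rw [if_neg (by simp [hP, hy])]
        have := phi_step_le' J A y θ hb hθ0.le t hfac (by norm_num)
        rw [Real.log_one] at this
        nlinarith [sq_nonneg θ]
      | false =>
        -- false positive with b correct
        rw [if_pos (by simp [hP, hy])]
        have hW' := Wsucc_posFalse J A y θ t hcond hy
        have hstep := phi_step_le J A y θ hb t hW' hfac (by norm_num)
        rw [Real.log_one] at hstep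
        have hq : θ ≤ (∑ C ∈ J.filter (fun C => A C t = true), wfun J A y θ t C)
            / (∑ C ∈ J, wfun J A y θ t C) := by
          rw [le_div_iff₀ hWpos]
          linarith [hcond]
        have hcW : θ/2 ≤ (1 - Real.exp (-1)) *
            ((∑ C ∈ J.filter (fun C => A C t = true), wfun J A y θ t C)
              / (∑ C ∈ J, wfun J A y θ t C)) := by
          have h12 : (1:ℝ)/2 ≤ 1 - Real.exp (-1) := by linarith
          nlinarith [hq, hθ0]
        have hrw : (1 - Real.exp (-1)) *
            (∑ C ∈ J.filter (fun C => A C t = true), wfun J A y θ t C)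
            / (∑ C ∈ J, wfun J A y θ t C)
            = (1 - Real.exp (-1)) *
            ((∑ C ∈ J.filter (fun C => A C t = true), wfun J A y θ t C)
              / (∑ C ∈ J, wfun J A y θ t C)) := by
          ring
        rw [hrw] at hstep
        linarith
    · rw [if_pos habm]
      have hfac : wfun J A y θ (t+1) b = wfun J A y θ t b * Real.exp (-1) := by
        rw [wfun_succ, if_pos hcond, if_pos habm]
      have := phi_step_le' J A y θ hb hθ0.le t hfac (Real.exp_pos _)
      rw [Real.log_exp] at this
      linarith
  · -- algorithm predicts 0
    have hP : Pfun J A y θ t = false := by simp [Pfun, hcond]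
    have hW0 : (1-θ) * (∑ C ∈ J, wfun J A y θ t C)
        ≤ (∑ C ∈ J, wfun J A y θ t C)
          - ∑ C ∈ J.filter (fun C => A C t = true), wfun J A y θ t C := by
      push_neg at hcond
      nlinarith [hcond]
    have hW' := Wsucc_neg J A y θ t hcond
    have hEθ' : θ/(1+θ) ≤ 1 - Real.exp (-θ) := by
      have : 1 - 1/(1+θ) = θ/(1+θ) := by field_simp; ring
      linarith
    have hqq : 1 - θ ≤ ((∑ C ∈ J, wfun J A y θ t C)
          - ∑ C ∈ J.filter (fun C => A C t = true), wfun J A y θ t C)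
            / (∑ C ∈ J, wfun J A y θ t C) := by
      rw [le_div_iff₀ hWpos]
      linarith [hW0]
    have hprod : (θ/(1+θ)) * (1-θ) ≤ (1 - Real.exp (-θ)) *
        (((∑ C ∈ J, wfun J A y θ t C)
          - ∑ C ∈ J.filter (fun C => A C t = true), wfun J A y θ t C)
            / (∑ C ∈ J, wfun J A y θ t C)) := by
      have hpos1 : (0:ℝ) ≤ θ/(1+θ) := by positivity
      have hpos2 : (0:ℝ) ≤ 1 - θ := by linarith
      have hEθpos : 0 ≤ 1 - Real.exp (-θ) := by
        have : Real.exp (-θ) ≤ 1 := Real.exp_le_one_iff.mpr (by linarith)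
        linarith
      exact mul_le_mul hEθ' hqq hpos2 hEθpos
    have hrw : (1 - Real.exp (-θ)) *
        ((∑ C ∈ J, wfun J A y θ t C)
          - ∑ C ∈ J.filter (fun C => A C t = true), wfun J A y θ t C)
        / (∑ C ∈ J, wfun J A y θ t C)
        = (1 - Real.exp (-θ)) *
        (((∑ C ∈ J, wfun J A y θ t C)
          - ∑ C ∈ J.filter (fun C => A C t = true), wfun J A y θ t C)
            / (∑ C ∈ J, wfun J A y θ t C)) := by
      ring
    by_cases habm : A b t = y t
    · rw [if_neg (not_not_intro habm)]
      cases hy : y t with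
      | true =>
        -- false negative with b correct
        rw [if_pos (by simp [hP, hy])]
        have hab : ¬ (A b t = false) := by rw [habm, hy]; simp
        have hfac : wfun J A y θ (t+1) b = wfun J A y θ t b * 1 := by
          rw [wfun_succ, if_neg hcond, if_neg hab]
        have hstep := phi_step_le J A y θ hb t hW' hfac (by norm_num)
        rw [Real.log_one, hrw] at hstep
        have hthird : θ/3 ≤ (θ/(1+θ)) * (1-θ) := by
          rw [div_mul_eq_mul_div, le_div_iff₀ h1θ]
          nlinarith [hθ0.le, hθ]
        linarith
      | false =>
        -- true negative: imputation leak
        rw [if_neg (by simp [hP, hy])]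
        have hab : A b t = false := by rw [habm, hy]
        have hfac : wfun J A y θ (t+1) b = wfun J A y θ t b * Real.exp (-θ) := by
          rw [wfun_succ, if_neg hcond, if_pos hab]
        have hstep := phi_step_le J A y θ hb t hW' hfac (Real.exp_pos _)
        rw [Real.log_exp, hrw] at hstep
        have hleak : θ - (θ/(1+θ)) * (1-θ) ≤ 2*θ^2 := by
          have key : (θ - 2*θ^2) * (1+θ) ≤ θ*(1-θ) := by nlinarith [hθ0.le]
          have h2 : θ - 2*θ^2 ≤ θ*(1-θ)/(1+θ) := by
            rw [le_div_iff₀ h1θ]; linarith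
          have h3 : (θ/(1+θ)) * (1-θ) = θ*(1-θ)/(1+θ) := by ring
          rw [h3]; linarith
        linarith
    · rw [if_pos habm]
      have hfac1 : (if A b t = false then Real.exp (-θ) else 1) = Real.exp (-θ)
          ∨ (if A b t = false then Real.exp (-θ) else 1) = 1 := by
        split_ifs <;> simp
      have hfac : wfun J A y θ (t+1) b = wfun J A y θ t b *
          (if A b t = false then Real.exp (-θ) else 1) := by
        rw [wfun_succ, if_neg hcond]
      cases hfac1 with
      | inl h =>
        rw [h] at hfac
        have := phi_step_le' J A y θ hb hθ0.le t hfac (Real.exp_pos _)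
        rw [Real.log_exp] at this
        linarith
      | inr h =>
        rw [h] at hfac
        have := phi_step_le' J A y θ hb hθ0.le t hfac (by norm_num)
        rw [Real.log_one] at this
        linarith

theorem Phi_zero (b : ι) : Phi J A y θ b 0 = Real.log J.card := by
  unfold Phi
  show Real.log (∑ _C ∈ J, (1:ℝ)) - Real.log 1 = _
  rw [Finset.sum_const, nsmul_eq_mul, mul_one, Real.log_one, sub_zero]

theorem Phi_nonneg {b : ι} (hb : b ∈ J) (t : ℕ) : 0 ≤ Phi J A y θ b t := by
  unfold Phi
  rw [sub_nonneg]
  apply Real.log_le_log (wfun_pos J A y θ t b)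
  exact Finset.single_le_sum (fun C _ => (wfun_pos J A y θ t C).le) hb

theorem Phi_le {b : ι} (hb : b ∈ J) (hθ0 : 0 < θ) (hθ : θ ≤ 1/2) (T : ℕ) :
    Phi J A y θ b T ≤ Real.log J.card + ∑ t ∈ Finset.range T,
      (if A b t ≠ y t then (1:ℝ) else if Pfun J A y θ t ≠ y t then -(θ/3) else 2*θ^2) := by
  induction T with
  | zero => simp [Phi_zero]
  | succ T ih =>
    rw [Finset.sum_range_succ]
    have := Phi_succ_le J A y θ hb hθ0 hθ T
    linarith

theorem expat_bound {b : ι} (hb : b ∈ J) (hθ0 : 0 < θ) (hθ : θ ≤ 1/2) (T k : ℕ)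
    (hbk : (((Finset.range T).filter (fun t => A b t ≠ y t)).card : ℝ) ≤ k) :
    (((Finset.range T).filter (fun t => Pfun J A y θ t ≠ y t)).card : ℝ)
      ≤ k + (3*(Real.log J.card + k))/θ + 6*T*θ := by
  classical
  set S := Finset.range T with hS
  set g : ℕ → ℝ := fun t =>
    (if A b t ≠ y t then (1:ℝ) else if Pfun J A y θ t ≠ y t then -(θ/3) else 2*θ^2) with hg
  have hsum : Phi J A y θ b T ≤ Real.log J.card + ∑ t ∈ S, g t := Phi_le J A y θ hb hθ0 hθ T
  have h0 : 0 ≤ Phi J A y θ b T := Phi_nonneg J A y θ hb T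
  set F1 := S.filter (fun t => A b t ≠ y t) with hF1
  set A2 := (S.filter (fun t => ¬ (A b t ≠ y t))).filter (fun t => Pfun J A y θ t ≠ y t) with hA2
  set A3 := (S.filter (fun t => ¬ (A b t ≠ y t))).filter (fun t => ¬ (Pfun J A y θ t ≠ y t)) with hA3
  have hsplit1 : ∑ t ∈ S, g t = ∑ t ∈ F1, g t + ∑ t ∈ S.filter (fun t => ¬ (A b t ≠ y t)), g t :=
    (Finset.sum_filter_add_sum_filter_not S (fun t => A b t ≠ y t) g).symm
  have hsplit2 : ∑ t ∈ S.filter (fun t => ¬ (A b t ≠ y t)), g t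
      = ∑ t ∈ A2, g t + ∑ t ∈ A3, g t :=
    (Finset.sum_filter_add_sum_filter_not _ (fun t => Pfun J A y θ t ≠ y t) g).symm
  have hgF1 : ∑ t ∈ F1, g t = F1.card := by
    rw [Finset.sum_congr rfl (fun t ht => ?_), Finset.sum_const, nsmul_eq_mul, mul_one]
    rw [hg]
    simp only []
    rw [if_pos (Finset.mem_filter.mp ht).2]
  have hgA2 : ∑ t ∈ A2, g t = -(θ/3) * A2.card := by
    rw [Finset.sum_congr rfl (fun t ht => ?_), Finset.sum_const, nsmul_eq_mul, mul_comm]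
    have h1 := Finset.mem_filter.mp ht
    have h2 := Finset.mem_filter.mp h1.1
    rw [hg]
    simp only []
    rw [if_neg h2.2, if_pos h1.2]
  have hgA3 : ∑ t ∈ A3, g t = 2*θ^2 * A3.card := by
    rw [Finset.sum_congr rfl (fun t ht => ?_), Finset.sum_const, nsmul_eq_mul, mul_comm]
    have h1 := Finset.mem_filter.mp ht
    have h2 := Finset.mem_filter.mp h1.1
    rw [hg]
    simp only []
    rw [if_neg h2.2, if_neg h1.2]
  have hA3T : (A3.card : ℝ) ≤ T := by
    have : A3 ⊆ S := fun t ht => Finset.mem_filter.mp (Finset.mem_filter.mp ht).1 |>.1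
    have := Finset.card_le_card this
    rw [hS] at this
    simp only [Finset.card_range] at this
    exact_mod_cast this
  have hF1k : (F1.card : ℝ) ≤ k := hbk
  have hkey : (θ/3) * A2.card ≤ Real.log J.card + k + 2*θ^2*T := by
    have hsum2 : ∑ t ∈ S, g t ≤ k + (-(θ/3) * A2.card) + 2*θ^2*T := by
      rw [hsplit1, hsplit2, hgF1, hgA2, hgA3]
      have h3 : 2*θ^2 * A3.card ≤ 2*θ^2*T := by
        apply mul_le_mul_of_nonneg_left hA3T
        positivity
      linarith
    linarith
  have hsubset : S.filter (fun t => Pfun J A y θ t ≠ y t) ⊆ A2 ∪ F1 := by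
    intro t ht
    have h1 := Finset.mem_filter.mp ht
    by_cases hp : A b t ≠ y t
    · exact Finset.mem_union_right _ (Finset.mem_filter.mpr ⟨h1.1, hp⟩)
    · exact Finset.mem_union_left _
        (Finset.mem_filter.mpr ⟨Finset.mem_filter.mpr ⟨h1.1, hp⟩, h1.2⟩)
  have hcard : ((S.filter (fun t => Pfun J A y θ t ≠ y t)).card : ℝ) ≤ A2.card + F1.card := by
    have h1 := Finset.card_le_card hsubset
    have h2 := Finset.card_union_le A2 F1
    have := le_trans h1 h2
    exact_mod_cast this
  have hA2bound : (A2.card : ℝ) ≤ (3*(Real.log J.card + k))/θ + 6*T*θ := by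
    have h3 : (A2.card : ℝ) ≤ (3/θ) * (Real.log J.card + k + 2*θ^2*T) := by
      rw [← mul_le_mul_iff_right₀ hθ0]
      calc θ * (A2.card : ℝ) = 3 * ((θ/3) * A2.card) := by ring
        _ ≤ 3 * (Real.log J.card + k + 2*θ^2*T) := by linarith [hkey]
        _ = θ * ((3/θ) * (Real.log J.card + k + 2*θ^2*T)) := by
            field_simp
    have h4 : (3/θ) * (Real.log J.card + k + 2*θ^2*T) = (3*(Real.log J.card + k))/θ + 6*T*θ := by
      field_simp
      ring
    linarith
  linarith

end ExpAT

section Learner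

theorem wfun_prod {ι : Type*} (J : Finset ι) (A : ι → ℕ → Bool) (y : ℕ → Bool) (θ : ℝ)
    (t : ℕ) (B : ι) :
    wfun J A y θ t B = ∏ s ∈ Finset.range t,
      (if Pfun J A y θ s = true
       then (if A B s ≠ y s then Real.exp (-1) else 1)
       else (if A B s = false then Real.exp (-θ) else 1)) := by
  induction t with
  | zero => simp [wfun]
  | succ t ih =>
    rw [Finset.prod_range_succ, ← ih, wfun_succ]
    congr 1
    by_cases hc : θ * (∑ C ∈ J, wfun J A y θ t C)
        ≤ ∑ C ∈ J.filter (fun C => A C t = true), wfun J A y θ t C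
    · rw [if_pos hc, if_pos (show Pfun J A y θ t = true by simp [Pfun, hc])]
    · rw [if_neg hc, if_neg (show ¬ Pfun J A y θ t = true by simp [Pfun, hc])]

variable {X : Type}

/-- The index set of experts: subsets of `range T` of size at most `ℓ`. -/
noncomputable def EIdx (T ℓ : ℕ) : Finset (Finset ℕ) :=
  (Finset.range T).powerset.filter (fun B => B.card ≤ ℓ)

/-- The weight the learner assigns to expert `B` given the feedback history. -/
noncomputable def lw (H : Set (X → Bool)) (θ : ℝ) (hist : List (X × Option Bool)) (xcur : X)
    (B : Finset ℕ) : ℝ :=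
  ∏ s ∈ Finset.range hist.length,
    ((hist.getD s (xcur, none)).2.elim
      (if eAdv H B (fun u => (hist.map Prod.fst).getD u xcur) s = false
        then Real.exp (-θ) else 1)
      (fun ys => if eAdv H B (fun u => (hist.map Prod.fst).getD u xcur) s ≠ ys
        then Real.exp (-1) else 1))

/-- The deterministic apple-tasting learner: covering experts + `ExpAT`. -/
noncomputable def theLrn (H : Set (X → Bool)) (T ℓ : ℕ) (θ : ℝ) : ConceptLearner X :=
  fun hist xcur =>
    decide (θ * (∑ B ∈ EIdx T ℓ, lw H θ hist xcur B)
      ≤ ∑ B ∈ (EIdx T ℓ).filter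
          (fun B => eAdv H B (fun u => (hist.map Prod.fst).getD u xcur) hist.length = true),
        lw H θ hist xcur B)

theorem histC_closed (L : ConceptLearner X) (x : ℕ → X) (y : ℕ → Bool) (t : ℕ) :
    histC X L x y t = (List.range t).map
      (fun s => (x s, if predC X L x y s = true then some (y s) else none)) := by
  induction t with
  | zero => rfl
  | succ t ih =>
    show histC X L x y t ++ [(x t, if L (histC X L x y t) (x t) = true then some (y t) else none)]
      = _
    rw [List.range_succ, List.map_append]
    congr 1

theorem getD_range_map {α : Type*} (f : ℕ → α) (t s : ℕ) (d : α) :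
    ((List.range t).map f).getD s d = if s < t then f s else d := by
  by_cases h : s < t
  · rw [if_pos h]
    rw [List.getD_eq_getElem _ _ (by simpa using h)]
    simp
  · rw [if_neg h]
    apply List.getD_eq_default
    simpa using Nat.le_of_not_lt h

variable {H : Set (X → Bool)}

theorem predC_eq (T ℓ : ℕ) (θ : ℝ) (x : ℕ → X) (y : ℕ → Bool) (t : ℕ) :
    predC X (theLrn H T ℓ θ) x y t
      = Pfun (EIdx T ℓ) (fun B s => eAdv H B x s) y θ t := by
  induction t using Nat.strong_induction_on with
  | _ t ih =>
    set L := theLrn H T ℓ θ with hL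
    set hist := histC X L x y t with hhist
    have hcl : hist = (List.range t).map
        (fun s => (x s, if predC X L x y s = true then some (y s) else none)) :=
      histC_closed L x y t
    have hlen : hist.length = t := by rw [hcl]; simp
    have hmapfst : hist.map Prod.fst = (List.range t).map x := by
      rw [hcl, List.map_map]
      rfl
    have hxf : ∀ s, s ≤ t → (hist.map Prod.fst).getD s (x t) = x s := by
      intro s hs
      rw [hmapfst, getD_range_map]
      rcases Nat.lt_or_ge s t with h | h
      · rw [if_pos h]
      · have : s = t := le_antisymm hs h
        rw [this, if_neg (lt_irrefl t)]
    have hadv : ∀ B s, s ≤ t →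
        eAdv H B (fun u => (hist.map Prod.fst).getD u (x t)) s = eAdv H B x s := by
      intro B s hs
      exact eAdv_congr B s (fun u hu => hxf u (le_trans hu hs))
    have hw : ∀ B, lw H θ hist (x t) B
        = wfun (EIdx T ℓ) (fun B s => eAdv H B x s) y θ t B := by
      intro B
      rw [lw, wfun_prod, hlen]
      apply Finset.prod_congr rfl
      intro s hs
      have hst : s < t := Finset.mem_range.mp hs
      have hentry : hist.getD s (x t, none)
          = (x s, if predC X L x y s = true then some (y s) else none) := by
        rw [hcl, getD_range_map, if_pos hst]
      rw [hentry, hadv B s (le_of_lt hst)]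
      rw [ih s hst]
      by_cases hp : Pfun (EIdx T ℓ) (fun B s => eAdv H B x s) y θ s = true
      · rw [if_pos hp, hp]
        simp [Option.elim]
      · rw [if_neg hp]
        have : Pfun (EIdx T ℓ) (fun B s => eAdv H B x s) y θ s = false :=
          Bool.eq_false_iff.mpr hp
        rw [this]
        simp [Option.elim]
    show L hist (x t) = _
    rw [hL]
    show decide _ = _
    rw [Pfun]
    apply decide_eq_decide.mpr
    have hfilter : (EIdx T ℓ).filter
        (fun B => eAdv H B (fun u => (hist.map Prod.fst).getD u (x t)) hist.length = true)
        = (EIdx T ℓ).filter (fun B => eAdv H B x t = true) := by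
      apply Finset.filter_congr
      intro B _
      rw [hlen, hadv B t (le_refl t)]
    rw [hfilter]
    constructor
    · intro hle
      calc θ * ∑ C ∈ EIdx T ℓ, wfun (EIdx T ℓ) (fun B s => eAdv H B x s) y θ t C
          = θ * ∑ B ∈ EIdx T ℓ, lw H θ hist (x t) B := by
            rw [Finset.sum_congr rfl (fun B _ => (hw B).symm)]
        _ ≤ ∑ B ∈ (EIdx T ℓ).filter (fun B => eAdv H B x t = true), lw H θ hist (x t) B := hle
        _ = _ := Finset.sum_congr rfl (fun B _ => hw B)
    · intro hle
      calc θ * ∑ B ∈ EIdx T ℓ, lw H θ hist (x t) B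
          = θ * ∑ C ∈ EIdx T ℓ, wfun (EIdx T ℓ) (fun B s => eAdv H B x s) y θ t C := by
            rw [Finset.sum_congr rfl (fun B _ => hw B)]
        _ ≤ ∑ C ∈ (EIdx T ℓ).filter (fun B => eAdv H B x t = true),
              wfun (EIdx T ℓ) (fun B s => eAdv H B x s) y θ t C := hle
        _ = _ := Finset.sum_congr rfl (fun B _ => (hw B).symm)

end Learner

end AT

set_option maxHeartbeats 1000000 in
/-- Upper bound for hard classes: there is a universal constant `C` such that for every
class `H` with `1 < w(H)` (i.e. `H` shatters width-1 trees of arbitrary depth) and finite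
Littlestone dimension `ℓ` (which in particular gives `w(H) < ∞`), every horizon `T ≥ 2`
and every realizability parameter `k`, some deterministic apple tasting learner makes at
most `C·√(T(k + ℓ·log T))` mistakes on every `k`-realizable sequence of length `T`. -/
theorem hard_class_upper_bound :
    ∃ C : ℝ, 0 < C ∧
      ∀ (X : Type) (H : Set (X → Bool)) (ℓ : ℕ),
        (∀ d : ℕ, W1Shatters H d) →
        IsGreatest {m : ℕ | Shatters H m} ℓ →
        ∀ T k : ℕ, 2 ≤ T →
          ∃ Lrn : ConceptLearner X, ∀ (x : ℕ → X) (y : ℕ → Bool),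
            (∃ h ∈ H, ((Finset.range T).filter (fun t => h (x t) ≠ y t)).card ≤ k) →
            (mistakesC X Lrn x y T : ℝ) ≤
              C * Real.sqrt (T * (k + ℓ * Real.log T)) := by
  classical
  refine ⟨100, by norm_num, ?_⟩
  intro X H ℓ hW1 hG T k hT2
  -- ℓ ≥ 1
  have hl1 : 1 ≤ ℓ := by
    have h1 := hW1 1
    cases h1 with
    | succ _ _ x hr hl =>
      obtain ⟨h, hh, hx⟩ := hr
      have hne0 : ({g ∈ H | g x = false}).Nonempty := by
        cases hl with
        | zero _ hne => exact hne
      have hs : Shatters H 1 :=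
        Shatters.succ H 0 x (Shatters.zero _ hne0) (Shatters.zero _ ⟨h, hh, hx⟩)
      exact hG.2 hs
  have hT0 : (0:ℝ) < T := by positivity
  have hT1R : (1:ℝ) ≤ T := by exact_mod_cast le_trans (by norm_num) hT2
  have hlogT : (0:ℝ) < Real.log T := Real.log_pos (by exact_mod_cast hT2)
  have hlogT2 : (1:ℝ)/2 ≤ Real.log T := by
    have h2 : Real.log 2 ≤ Real.log T := by
      apply Real.log_le_log (by norm_num)
      exact_mod_cast hT2
    have := Real.log_two_gt_d9
    linarith
  -- expert index cardinality bounds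
  set n := (AT.EIdx T ℓ).card with hn
  have h2n : 2 ≤ n := by
    have hsub : ({∅, {0}} : Finset (Finset ℕ)) ⊆ AT.EIdx T ℓ := by
      intro B hB
      rw [Finset.mem_insert, Finset.mem_singleton] at hB
      unfold AT.EIdx
      rw [Finset.mem_filter, Finset.mem_powerset]
      cases hB with
      | inl h => subst h; exact ⟨Finset.empty_subset _, by simp⟩
      | inr h =>
        subst h
        constructor
        · intro a ha
          rw [Finset.mem_singleton] at ha
          subst ha
          exact Finset.mem_range.mpr (by omega)
        · simpa using hl1
    have hcard : ({∅, {0}} : Finset (Finset ℕ)).card = 2 := by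
      rw [Finset.card_insert_of_notMem (by
        simp only [Finset.mem_singleton]
        exact fun hcontra => (Finset.singleton_ne_empty 0) hcontra.symm), Finset.card_singleton]
    calc 2 = ({∅, {0}} : Finset (Finset ℕ)).card := hcard.symm
      _ ≤ n := Finset.card_le_card hsub
  have hnub : n ≤ (ℓ+1) * T^ℓ := by
    have hsub : AT.EIdx T ℓ ⊆ (Finset.range (ℓ+1)).biUnion
        (fun i => (Finset.range T).powersetCard i) := by
      intro B hB
      unfold AT.EIdx at hB
      rw [Finset.mem_filter, Finset.mem_powerset] at hB
      apply Finset.mem_biUnion.mpr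
      exact ⟨B.card, Finset.mem_range.mpr (by omega), Finset.mem_powersetCard.mpr ⟨hB.1, rfl⟩⟩
    calc n ≤ ((Finset.range (ℓ+1)).biUnion (fun i => (Finset.range T).powersetCard i)).card :=
        Finset.card_le_card hsub
      _ ≤ ∑ i ∈ Finset.range (ℓ+1), ((Finset.range T).powersetCard i).card :=
        Finset.card_biUnion_le
      _ ≤ ∑ _i ∈ Finset.range (ℓ+1), T^ℓ := by
        apply Finset.sum_le_sum
        intro i hi
        rw [Finset.card_powersetCard, Finset.card_range]
        calc T.choose i ≤ T^i := Nat.choose_le_pow T i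
          _ ≤ T^ℓ := Nat.pow_le_pow_right (by omega) (by
              have := Finset.mem_range.mp hi; omega)
      _ = (ℓ+1) * T^ℓ := by rw [Finset.sum_const, Finset.card_range, smul_eq_mul]
  set L : ℝ := Real.log n with hLdef
  have hL0 : 0 < L := Real.log_pos (by exact_mod_cast h2n)
  have hLub : L ≤ 3 * ℓ * Real.log T := by
    have hstep : L ≤ Real.log ((ℓ+1 : ℝ) * (T:ℝ)^ℓ) := by
      apply Real.log_le_log (by exact_mod_cast Nat.lt_of_lt_of_le (by norm_num) h2n)
      calc (n:ℝ) ≤ ((ℓ+1) * T^ℓ : ℕ) := by exact_mod_cast hnub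
        _ = (ℓ+1 : ℝ) * (T:ℝ)^ℓ := by push_cast; ring
    have hsplit : Real.log ((ℓ+1 : ℝ) * (T:ℝ)^ℓ)
        = Real.log (ℓ+1 : ℝ) + ℓ * Real.log T := by
      rw [Real.log_mul (by positivity) (by positivity), Real.log_pow]
    have hlog1 : Real.log (ℓ+1 : ℝ) ≤ ℓ := by
      rw [Real.log_le_iff_le_exp (by positivity)]
      have := Real.add_one_le_exp (ℓ:ℝ)
      linarith
    have hll : (ℓ:ℝ) ≤ 2 * ℓ * Real.log T := by
      have h1 : (ℓ:ℝ) * 1 ≤ (ℓ:ℝ) * (2 * Real.log T) := by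
        apply mul_le_mul_of_nonneg_left _ (by positivity)
        linarith
      linarith
    calc L ≤ Real.log (ℓ+1 : ℝ) + ℓ * Real.log T := hstep.trans_eq hsplit
      _ ≤ ℓ + ℓ * Real.log T := by linarith
      _ ≤ 2 * ℓ * Real.log T + ℓ * Real.log T := by linarith
      _ = 3 * ℓ * Real.log T := by ring
  -- the learning rate / threshold
  set θ : ℝ := min (1/2) (Real.sqrt ((k + L)/T)) with hθdef
  have hkL0 : (0:ℝ) < k + L := by positivity
  have hsq0 : 0 < Real.sqrt ((k + L)/T) := Real.sqrt_pos.mpr (by positivity)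
  have hθ0 : 0 < θ := lt_min (by norm_num) hsq0
  have hθhalf : θ ≤ 1/2 := min_le_left _ _
  refine ⟨AT.theLrn H T ℓ θ, ?_⟩
  intro x y hreal
  obtain ⟨h, hh, hk⟩ := hreal
  -- the covering expert
  obtain ⟨B, hBsub, hBcard, hBadv⟩ := AT.cover hG x hh T
  have hbJ : B ∈ AT.EIdx T ℓ := by
    unfold AT.EIdx
    rw [Finset.mem_filter, Finset.mem_powerset]
    exact ⟨hBsub, hBcard⟩
  set A : Finset ℕ → ℕ → Bool := fun B s => AT.eAdv H B x s with hA
  have hbk : (((Finset.range T).filter (fun t => A B t ≠ y t)).card : ℝ) ≤ k := by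
    have hfeq : (Finset.range T).filter (fun t => A B t ≠ y t)
        = (Finset.range T).filter (fun t => h (x t) ≠ y t) := by
      apply Finset.filter_congr
      intro t ht
      rw [hA]
      simp only []
      rw [hBadv t (Finset.mem_range.mp ht)]
    rw [hfeq]
    exact_mod_cast hk
  -- identify the learner's mistakes with ExpAT's mistakes
  have hM : mistakesC X (AT.theLrn H T ℓ θ) x y T
      = ((Finset.range T).filter
          (fun t => AT.Pfun (AT.EIdx T ℓ) A y θ t ≠ y t)).card := by
    unfold mistakesC
    congr 1
    apply Finset.filter_congr
    intro t _
    rw [AT.predC_eq T ℓ θ x y t]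
  have hMT : (mistakesC X (AT.theLrn H T ℓ θ) x y T : ℝ) ≤ T := by
    have := Finset.card_filter_le (Finset.range T)
      (fun t => predC X (AT.theLrn H T ℓ θ) x y t ≠ y t)
    rw [Finset.card_range] at this
    exact_mod_cast this
  have hbound := AT.expat_bound (AT.EIdx T ℓ) A y θ hbJ hθ0 hθhalf T k hbk
  rw [← hLdef] at hbound
  rw [hM] at hMT ⊢
  set MR : ℝ := (((Finset.range T).filter
      (fun t => AT.Pfun (AT.EIdx T ℓ) A y θ t ≠ y t)).card : ℝ) with hMRdef
  -- square-root arithmetic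
  set G := Real.sqrt (T * (k + ℓ * Real.log T)) with hGdef
  set R := Real.sqrt (T * (k + L)) with hRdef
  have hG0 : 0 ≤ G := Real.sqrt_nonneg _
  have hR0 : 0 ≤ R := Real.sqrt_nonneg _
  have hRG : R ≤ 2 * G := by
    have hinner : (T:ℝ) * (k + L) ≤ 4 * ((T:ℝ) * (k + ℓ * Real.log T)) := by
      have h1 : (k:ℝ) + L ≤ 4 * ((k:ℝ) + ℓ * Real.log T) := by
        have hk0 : (0:ℝ) ≤ k := by positivity
        have hlT0 : (0:ℝ) ≤ (ℓ:ℝ) * Real.log T := by positivity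
        linarith [hLub]
      nlinarith [hT0.le, h1]
    calc R ≤ Real.sqrt (4 * ((T:ℝ) * (k + ℓ * Real.log T))) := Real.sqrt_le_sqrt hinner
      _ = 2 * G := by
        rw [show (4:ℝ) * ((T:ℝ) * (k + ℓ * Real.log T))
            = 2^2 * ((T:ℝ) * (k + ℓ * Real.log T)) by norm_num,
          Real.sqrt_mul (by positivity), Real.sqrt_sq (by norm_num), ← hGdef]
  by_cases hcase : Real.sqrt ((k + L)/T) ≤ 1/2
  · -- the nondegenerate regime: θ = √((k+L)/T)
    have hθeq : θ = Real.sqrt ((k + L)/T) := min_eq_right hcase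
    have hRθ : R * θ = k + L := by
      rw [hRdef, hθeq, ← Real.sqrt_mul (by positivity)]
      rw [show (T:ℝ) * (k + L) * ((k + L)/T) = (k+L)^2 by field_simp]
      exact Real.sqrt_sq hkL0.le
    have hTθ : (T:ℝ) * θ = R := by
      rw [hθeq, hRdef]
      rw [show (T:ℝ) * Real.sqrt (((k:ℝ) + L)/T) = Real.sqrt (((T:ℝ))^2) * Real.sqrt (((k:ℝ)+L)/T) by
        rw [Real.sqrt_sq hT0.le]]
      rw [← Real.sqrt_mul (by positivity)]
      congr 1
      field_simp
    have hdivθ : (3*(L + k))/θ = 3 * R := by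
      rw [div_eq_iff (ne_of_gt hθ0), show (3:ℝ)*R*θ = 3*(R*θ) by ring, hRθ]
      ring
    have hfinal : MR ≤ k + 9 * R := by
      calc MR ≤ k + (3*(L + k))/θ + 6*T*θ := hbound
        _ = k + 3*R + 6*(T*θ) := by rw [hdivθ]; ring
        _ = k + 9 * R := by rw [hTθ]; ring
    by_cases hkT : (k:ℝ) ≤ T
    · have hkR : (k:ℝ) ≤ R := by
        have h1 : ((k:ℝ))^2 ≤ T * (k + L) := by nlinarith [hL0.le, hkT, (by positivity : (0:ℝ) ≤ (k:ℝ))]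
        calc (k:ℝ) = Real.sqrt ((k:ℝ)^2) := (Real.sqrt_sq (by positivity)).symm
          _ ≤ R := Real.sqrt_le_sqrt h1
      calc MR ≤ k + 9 * R := hfinal
        _ ≤ 10 * R := by linarith
        _ ≤ 20 * G := by linarith
        _ ≤ 100 * G := by linarith
    · push_neg at hkT
      have hTR : (T:ℝ) ≤ R := by
        have h1 : ((T:ℝ))^2 ≤ T * (k + L) := by nlinarith [hL0.le]
        calc (T:ℝ) = Real.sqrt ((T:ℝ)^2) := (Real.sqrt_sq hT0.le).symm
          _ ≤ R := Real.sqrt_le_sqrt h1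
      calc MR ≤ (T:ℝ) := hMT
        _ ≤ R := hTR
        _ ≤ 2 * G := hRG
        _ ≤ 100 * G := by linarith
  · -- the degenerate regime: T ≤ 4(k+L), the trivial bound T suffices
    push_neg at hcase
    have h14 : (1:ℝ)/4 < (k + L)/T := by
      have h1 : ((1:ℝ)/2)^2 < Real.sqrt ((k + L)/T)^2 := by
        apply sq_lt_sq' _ hcase
        linarith [hsq0]
      rw [Real.sq_sqrt (by positivity)] at h1
      linarith [h1]
    have hT4 : (T:ℝ) ≤ 4 * (k + L) := by
      rw [lt_div_iff₀ hT0] at h14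
      linarith
    have hTR : (T:ℝ)/2 ≤ R := by
      have h1 : ((T:ℝ)/2)^2 ≤ T * (k + L) := by nlinarith [hT0.le]
      calc (T:ℝ)/2 = Real.sqrt (((T:ℝ)/2)^2) := (Real.sqrt_sq (by positivity)).symm
        _ ≤ R := Real.sqrt_le_sqrt h1
    calc MR ≤ (T:ℝ) := hMT
      _ ≤ 2 * R := by linarith
      _ ≤ 4 * G := by linarith
      _ ≤ 100 * G := by linarith
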